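/- Let R be a graded integral domain (a commutative G-graded ring with no nonzero homogeneous zero divisors). Then R is a graded field if and only if the polynomial ring R[X] (with its induced grading) is a graded radically principal ring. -/

import Mathlib

open DirectSum

variable {G A : Type*} [AddGroup G] [DecidableEq G] [CommRing A]

def gradedRadical (𝒜 : G → AddSubgroup A) [GradedRing 𝒜] (I : Ideal A) : Set A :=
  {x | ∀ g : G, ∃ n : ℕ, ((DirectSum.decompose 𝒜 x g : A)) ^ n ∈ I}

def IsGradedRadicallyPrincipal (𝒜 : G → AddSubgroup A) [GradedRing 𝒜] (I : Ideal A) : Prop :=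
  ∃ c : A, SetLike.IsHomogeneousElem 𝒜 c ∧ gradedRadical 𝒜 I = gradedRadical 𝒜 (Ideal.span {c})

def GradedRadicallyPrincipalRing (𝒜 : G → AddSubgroup A) [GradedRing 𝒜] : Prop :=
  ∀ I : Ideal A, I.IsHomogeneous 𝒜 → IsGradedRadicallyPrincipal 𝒜 I

def IsGradedPrime (𝒜 : G → AddSubgroup A) [GradedRing 𝒜] (P : Ideal A) : Prop :=
  P ≠ ⊤ ∧ P.IsHomogeneous 𝒜 ∧
    ∀ ⦃x y : A⦄, SetLike.IsHomogeneousElem 𝒜 x → SetLike.IsHomogeneousElem 𝒜 y → x * y ∈ P →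
      x ∈ P ∨ y ∈ P

lemma aux_mem_gradedRadical_of_mem (𝒜 : G → AddSubgroup A) [GradedRing 𝒜]
    {J : Ideal A} {y : A} {i : G} (hy : y ∈ 𝒜 i) (hyJ : y ∈ J) :
    y ∈ gradedRadical 𝒜 J := by
  intro j
  by_cases h : i = j
  · subst h
    exact ⟨1, by rw [DirectSum.decompose_of_mem_same 𝒜 hy]; simpa⟩
  · exact ⟨1, by rw [DirectSum.decompose_of_mem_ne 𝒜 hy h]; simpa using J.zero_mem⟩

lemma aux_pow_mem_of_mem_gradedRadical (𝒜 : G → AddSubgroup A) [GradedRing 𝒜]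
    {J : Ideal A} {y : A} {i : G} (hy : y ∈ 𝒜 i) (h : y ∈ gradedRadical 𝒜 J) :
    ∃ n : ℕ, y ^ n ∈ J := by
  obtain ⟨n, hn⟩ := h i
  rw [DirectSum.decompose_of_mem_same 𝒜 hy] at hn
  exact ⟨n, hn⟩

theorem stmt_16 (𝒜 : G → AddSubgroup A) [GradedRing 𝒜]
    (hdom : ∀ x y : A, SetLike.IsHomogeneousElem 𝒜 x → SetLike.IsHomogeneousElem 𝒜 y →
      x * y = 0 → x = 0 ∨ y = 0)
    (ℬ : G × ℤ → AddSubgroup (Polynomial A)) [GradedRing ℬ]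
    (hℬ : ∀ (g : G) (n : ℕ), (ℬ (g, (n : ℤ)) : Set (Polynomial A)) =
      {p | ∃ a ∈ 𝒜 g, p = Polynomial.C a * Polynomial.X ^ n})
    (hℬneg : ∀ (g : G) (n : ℤ), n < 0 → ℬ (g, n) = ⊥) :
    (∀ x : A, SetLike.IsHomogeneousElem 𝒜 x → x ≠ 0 → IsUnit x) ↔
      GradedRadicallyPrincipalRing ℬ := by
  classical
  -- structure of homogeneous elements of ℬ
  have hstruct : ∀ (γ : G × ℤ) (p : Polynomial A), p ∈ ℬ γ →
      p = 0 ∨ ∃ (a : A) (k : ℕ), a ∈ 𝒜 γ.1 ∧ γ.2 = (k : ℤ) ∧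
        p = Polynomial.C a * Polynomial.X ^ k := by
    rintro ⟨g, m⟩ p hp
    rcases lt_or_ge m 0 with hm | hm
    · left
      have := hℬneg g m hm
      rw [this] at hp
      simpa using hp
    · right
      lift m to ℕ using hm
      have := hℬ g m
      have hp' : p ∈ (ℬ (g, (m : ℤ)) : Set (Polynomial A)) := hp
      rw [this] at hp'
      obtain ⟨a, ha, rfl⟩ := hp'
      exact ⟨a, m, ha, rfl, rfl⟩
  have hXmem : (Polynomial.X : Polynomial A) ∈ ℬ (0, (1 : ℤ)) := by
    have : (Polynomial.X : Polynomial A) ∈ (ℬ (0, ((1 : ℕ) : ℤ)) : Set (Polynomial A)) := by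
      rw [hℬ 0 1]
      exact ⟨1, SetLike.GradedOne.one_mem, by simp⟩
    simpa using this
  have hCmem : ∀ {a : A} {g : G}, a ∈ 𝒜 g → (Polynomial.C a) ∈ ℬ (g, (0 : ℤ)) := by
    intro a g ha
    have : (Polynomial.C a) ∈ (ℬ (g, ((0 : ℕ) : ℤ)) : Set (Polynomial A)) := by
      rw [hℬ g 0]
      exact ⟨a, ha, by simp⟩
    simpa using this
  constructor
  · -- graded field → graded radically principal
    intro hfield I hI
    by_cases hT : ∃ n : ℕ, (Polynomial.X : Polynomial A) ^ n ∈ I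
    · set m := Nat.find hT with hm
      have hXmI : (Polynomial.X : Polynomial A) ^ m ∈ I := Nat.find_spec hT
      refine ⟨Polynomial.X ^ m, ⟨(0, (m : ℤ)), ?_⟩, ?_⟩
      · have : (Polynomial.X : Polynomial A) ^ m ∈ (ℬ (0, (m : ℤ)) : Set (Polynomial A)) := by
          rw [hℬ 0 m]
          exact ⟨1, SetLike.GradedOne.one_mem, by simp⟩
        exact this
      · -- key: every homogeneous element of I lies in span {X^m}
        have key : ∀ (γ : G × ℤ) (p : Polynomial A), p ∈ ℬ γ → p ∈ I →
            p ∈ Ideal.span {(Polynomial.X : Polynomial A) ^ m} := by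
          intro γ p hpB hpI
          rcases hstruct γ p hpB with rfl | ⟨a, k, ha, hk, rfl⟩
          · exact Ideal.zero_mem _
          · by_cases ha0 : a = 0
            · subst ha0; simp
            · have hu : IsUnit a := hfield a ⟨γ.1, ha⟩ ha0
              obtain ⟨u, rfl⟩ := hu
              have hXk : (Polynomial.X : Polynomial A) ^ k ∈ I := by
                have := I.mul_mem_left (Polynomial.C ((u⁻¹ : Aˣ) : A)) hpI
                have heq : Polynomial.C ((u⁻¹ : Aˣ) : A) *
                    (Polynomial.C ((u : A)) * Polynomial.X ^ k) =
                    Polynomial.X ^ k := by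
                  rw [← mul_assoc, ← Polynomial.C_mul]
                  simp
                rwa [heq] at this
              have hmk : m ≤ k := Nat.find_min' hT hXk
              rw [Ideal.mem_span_singleton]
              exact ⟨Polynomial.C (u : A) * Polynomial.X ^ (k - m), by
                rw [mul_comm (Polynomial.X ^ m) _, mul_assoc, ← pow_add, Nat.sub_add_cancel hmk]⟩
        have hspan_le : Ideal.span {(Polynomial.X : Polynomial A) ^ m} ≤ I := by
          rw [Ideal.span_le]; simpa using hXmI
        ext x
        constructor
        · intro h γ
          obtain ⟨n, hn⟩ := h γ
          refine ⟨n, key (n • γ) _ (SetLike.pow_mem_graded n (DirectSum.decompose ℬ x γ).2) hn⟩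
        · intro h γ
          obtain ⟨n, hn⟩ := h γ
          exact ⟨n, hspan_le hn⟩
    · -- I has no nonzero homogeneous elements, hence I = ⊥
      have hI0 : I = ⊥ := by
        rw [eq_bot_iff]
        intro p hp
        have : p = ∑ γ ∈ (DirectSum.decompose ℬ p).support,
            (DirectSum.decompose ℬ p γ : Polynomial A) :=
          (DirectSum.sum_support_decompose ℬ p).symm
        rw [this]
        refine Ideal.sum_mem _ fun γ _ => ?_
        have hpγ : (DirectSum.decompose ℬ p γ : Polynomial A) ∈ I := hI γ hp
        rcases hstruct γ _ (DirectSum.decompose ℬ p γ).2 with h0 | ⟨a, k, ha, hk, heq⟩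
        · rw [h0]; exact Ideal.zero_mem _
        · by_cases ha0 : a = 0
          · rw [heq, ha0]; simp
          · exfalso
            have hu : IsUnit a := hfield a ⟨γ.1, ha⟩ ha0
            obtain ⟨u, rfl⟩ := hu
            refine hT ⟨k, ?_⟩
            have := I.mul_mem_left (Polynomial.C ((u⁻¹ : Aˣ) : A)) (heq ▸ hpγ)
            have heq2 : Polynomial.C ((u⁻¹ : Aˣ) : A) *
                (Polynomial.C ((u : A)) * Polynomial.X ^ k) = Polynomial.X ^ k := by
              rw [← mul_assoc, ← Polynomial.C_mul]; simp
            rwa [heq2] at this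
      refine ⟨0, ⟨(0, 0), AddSubgroup.zero_mem _⟩, ?_⟩
      rw [hI0, Ideal.span_singleton_eq_bot.mpr rfl]
  · -- graded radically principal → graded field
    intro hRP x hx hxne
    have : Nontrivial A := nontrivial_of_ne x 0 hxne
    obtain ⟨g, hxg⟩ := hx
    set I := Ideal.span {Polynomial.C x, (Polynomial.X : Polynomial A)} with hIdef
    have hIhom : I.IsHomogeneous ℬ := by
      apply Ideal.homogeneous_span
      rintro p hp
      rcases hp with rfl | rfl
      · exact ⟨(g, 0), hCmem hxg⟩
      · exact ⟨(0, 1), hXmem⟩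
    obtain ⟨c, ⟨γ, hcγ⟩, hrad⟩ := hRP I hIhom
    -- X and C x are in gradedRadical (span {c})
    have hXrad : (Polynomial.X : Polynomial A) ∈ gradedRadical ℬ (Ideal.span {c}) := by
      rw [← hrad]
      exact aux_mem_gradedRadical_of_mem ℬ hXmem
        (Ideal.subset_span (by simp))
    have hCxrad : (Polynomial.C x) ∈ gradedRadical ℬ (Ideal.span {c}) := by
      rw [← hrad]
      exact aux_mem_gradedRadical_of_mem ℬ (hCmem hxg)
        (Ideal.subset_span (by simp))
    obtain ⟨n₁, hn₁⟩ := aux_pow_mem_of_mem_gradedRadical ℬ hXmem hXrad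
    have hc0 : c ≠ 0 := by
      rintro rfl
      rw [Ideal.span_singleton_eq_bot.mpr rfl, Ideal.mem_bot] at hn₁
      exact (Polynomial.monic_X_pow n₁).ne_zero hn₁
    obtain ⟨a, k, ha, hk, rfl⟩ := (hstruct γ c hcγ).resolve_left hc0
    -- a is a unit
    rw [Ideal.mem_span_singleton] at hn₁
    obtain ⟨p, hp⟩ := hn₁
    have hXn : (Polynomial.X : Polynomial A) ^ n₁ = (p * Polynomial.C a) * Polynomial.X ^ k := by
      rw [hp]; ring
    have hcoeff := congrArg (fun q => Polynomial.coeff q n₁) hXn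
    simp only [Polynomial.coeff_X_pow, if_pos rfl, if_true, Polynomial.coeff_mul_X_pow'] at hcoeff
    by_cases hkn : k ≤ n₁
    · rw [if_pos hkn, Polynomial.coeff_mul_C] at hcoeff
      have hua : IsUnit a := IsUnit.of_mul_eq_one (a := a) (p.coeff (n₁ - k)) (by
        rw [mul_comm]; exact hcoeff.symm)
      -- x powers are nonzero
      have hxpow : ∀ n : ℕ, x ^ n ≠ 0 := by
        intro n
        induction n with
        | zero => simpa using one_ne_zero
        | succ j ih =>
          intro h0
          rw [pow_succ] at h0
          rcases hdom (x ^ j) x ⟨j • g, SetLike.pow_mem_graded j hxg⟩ ⟨g, hxg⟩ h0 with h | h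
          · exact ih h
          · exact hxne h
      -- show k = 0
      obtain ⟨n₂, hn₂⟩ := aux_pow_mem_of_mem_gradedRadical ℬ (hCmem hxg) hCxrad
      rw [Ideal.mem_span_singleton] at hn₂
      obtain ⟨q, hq⟩ := hn₂
      have hk0 : k = 0 := by
        by_contra hk0
        have hq' : Polynomial.C (x ^ n₂) = (q * Polynomial.C a) * Polynomial.X ^ k := by
          rw [Polynomial.C_pow, hq]; ring
        have := congrArg (fun r => Polynomial.coeff r 0) hq'
        simp only [Polynomial.coeff_C_zero, Polynomial.coeff_mul_X_pow'] at this
        rw [if_neg (fun h => hk0 (Nat.le_zero.mp h))] at this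
        exact hxpow n₂ this
      -- hence C a is a unit and span {c} = ⊤, so 1 ∈ I
      subst hk0
      have huc : IsUnit (Polynomial.C a * Polynomial.X ^ (0 : ℕ)) := by
        simpa using hua.map Polynomial.C
      have h1rad : (1 : Polynomial A) ∈ gradedRadical ℬ (Ideal.span {Polynomial.C a * Polynomial.X ^ (0 : ℕ)}) := by
        refine aux_mem_gradedRadical_of_mem ℬ (i := (0, (0:ℤ))) ?_ ?_
        · have : (1 : Polynomial A) ∈ (ℬ (0, ((0 : ℕ) : ℤ)) : Set (Polynomial A)) := by
            rw [hℬ 0 0]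
            exact ⟨1, SetLike.GradedOne.one_mem, by simp⟩
          simpa using this
        · rw [Ideal.span_singleton_eq_top.mpr huc]
          exact Submodule.mem_top
      rw [← hrad] at h1rad
      have h1memB : (1 : Polynomial A) ∈ ℬ (0, (0 : ℤ)) := by
        have : (1 : Polynomial A) ∈ (ℬ (0, ((0 : ℕ) : ℤ)) : Set (Polynomial A)) := by
          rw [hℬ 0 0]
          exact ⟨1, SetLike.GradedOne.one_mem, by simp⟩
        simpa using this
      obtain ⟨n₃, hn₃⟩ := aux_pow_mem_of_mem_gradedRadical ℬ h1memB h1rad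
      rw [one_pow] at hn₃
      rw [hIdef, Ideal.mem_span_pair] at hn₃
      obtain ⟨u, v, huv⟩ := hn₃
      have hcoeff0 := congrArg (fun r => Polynomial.coeff r 0) huv
      simp only [Polynomial.coeff_add, Polynomial.mul_coeff_zero, Polynomial.coeff_C_zero,
        Polynomial.coeff_X_zero, mul_zero, add_zero, Polynomial.coeff_one] at hcoeff0
      exact IsUnit.of_mul_eq_one (a := x) (u.coeff 0) (by rw [mul_comm]; simpa using hcoeff0)
    · rw [if_neg hkn] at hcoeff
      exact absurd hcoeff one_ne_zero
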